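/- There are no integers p, q, z satisfying 25p² - 1 = q² - 20z². -/

import Mathlib

private lemma zmod5_key : ∀ r : ZMod 5, r * r ≠ 0 → (r * r) ^ 2 = 1 := by decide

private lemma zmod5_25 : (25 : ZMod 5) = 0 := by decide
private lemma zmod5_20 : (20 : ZMod 5) = 0 := by decide
private lemma zmod5_5 : (5 : ZMod 5) = 0 := by decide
private lemma zmod5_ne : (1 : ZMod 5) ≠ -1 := by decide

/-- Every prime factor `ℓ` of `20z² - 1` satisfies `ℓ² ≡ 1 [MOD 5]` (it is `≡ ±1 mod 5`),
because `5` is a quadratic residue mod `ℓ` and `5 ≡ 1 mod 4`. -/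
lemma prime_factor_sq_one (z : ℤ) (ℓ : ℕ) (hℓ : ℓ.Prime) (hdvd : (ℓ : ℤ) ∣ 20 * z ^ 2 - 1) :
    ((ℓ : ZMod 5)) ^ 2 = 1 := by
  -- ℓ ≠ 2
  have hℓ2 : ℓ ≠ 2 := by
    rintro rfl
    have h2 : (2 : ℤ) ∣ 20 * z ^ 2 - 1 := by exact_mod_cast hdvd
    have hodd : Odd (20 * z ^ 2 - 1) := ⟨10 * z ^ 2 - 1, by ring⟩
    exact (Int.not_even_iff_odd.mpr hodd) (even_iff_two_dvd.mpr h2)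
  -- ℓ ≠ 5
  have hℓ5 : ℓ ≠ 5 := by
    rintro rfl
    have h5 : (5 : ℤ) ∣ 20 * z ^ 2 - 1 := by exact_mod_cast hdvd
    have h5' : (5 : ℤ) ∣ 20 * z ^ 2 := ⟨4 * z ^ 2, by ring⟩
    have : (5 : ℤ) ∣ 1 := by
      have := dvd_sub h5' h5
      simpa using this
    norm_num at this
  haveI : Fact ℓ.Prime := ⟨hℓ⟩
  -- In `ZMod ℓ`, `20 * z² = 1`
  have h0 : (20 : ZMod ℓ) * (z : ZMod ℓ) ^ 2 = 1 := by
    have := (ZMod.intCast_zmod_eq_zero_iff_dvd (20 * z ^ 2 - 1) ℓ).mpr hdvd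
    push_cast at this
    linear_combination this
  -- `5` is a square mod ℓ : 5 = (1/(2z))²
  have hw : ((2 : ZMod ℓ) * z) ≠ 0 := by
    intro hzero
    have h5 : (20 : ZMod ℓ) * (z : ZMod ℓ) ^ 2 = 5 * ((2 : ZMod ℓ) * z) ^ 2 := by ring
    rw [h5, hzero] at h0
    simp at h0
  have hinv : ((2 : ZMod ℓ) * z)⁻¹ * ((2 : ZMod ℓ) * z) = 1 := inv_mul_cancel₀ hw
  have h5 : (5 : ZMod ℓ) * ((2 : ZMod ℓ) * z) ^ 2 = 1 := by rw [← h0]; ring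
  have hsq5 : IsSquare ((5 : ℕ) : ZMod ℓ) := by
    refine ⟨((2 : ZMod ℓ) * z)⁻¹, ?_⟩
    push_cast
    calc (5 : ZMod ℓ) = (((2 : ZMod ℓ) * z)⁻¹ * ((2 : ZMod ℓ) * z)) ^ 2 * 5 := by
          rw [hinv]; ring
      _ = (((2 : ZMod ℓ) * z)⁻¹ * ((2 : ZMod ℓ) * z)⁻¹) * (5 * ((2 : ZMod ℓ) * z) ^ 2) := by
          ring
      _ = ((2 : ZMod ℓ) * z)⁻¹ * ((2 : ZMod ℓ) * z)⁻¹ := by rw [h5, mul_one]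
  -- by quadratic reciprocity, ℓ is a square mod 5
  haveI : Fact (Nat.Prime 5) := ⟨by norm_num⟩
  have hsqℓ : IsSquare ((ℓ : ℕ) : ZMod 5) :=
    (ZMod.exists_sq_eq_prime_iff_of_mod_four_eq_one (by norm_num) hℓ2).mpr hsq5
  -- ℓ is nonzero mod 5
  have hne : ((ℓ : ℕ) : ZMod 5) ≠ 0 := by
    rw [Ne, ZMod.natCast_eq_zero_iff]
    intro h5dvd
    exact hℓ5 ((Nat.prime_dvd_prime_iff_eq (by norm_num) hℓ).mp h5dvd).symm
  obtain ⟨r, hr⟩ := hsqℓ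
  rw [hr] at hne ⊢
  exact zmod5_key r hne

/-- Every (natural) divisor of `|20z² - 1|` squares to `1` mod 5. -/
lemma divisor_sq_one (z : ℤ) : ∀ d : ℕ, d ∣ (20 * z ^ 2 - 1).natAbs →
    ((d : ZMod 5)) ^ 2 = 1 := by
  have hN : (20 * z ^ 2 - 1).natAbs ≠ 0 := by
    rw [Int.natAbs_ne_zero]
    intro h
    have hodd : Odd (20 * z ^ 2 - 1) := ⟨10 * z ^ 2 - 1, by ring⟩
    rw [h] at hodd
    exact (Int.not_even_iff_odd.mpr hodd) Even.zero
  intro d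
  induction d using Nat.strong_induction_on with
  | _ d ih =>
    intro hd
    rcases Nat.eq_zero_or_pos d with rfl | hdpos
    · exact absurd (Nat.eq_zero_of_zero_dvd hd) hN
    rcases Nat.eq_or_lt_of_le hdpos with h1 | h2
    · rw [← h1]; norm_num
    obtain ⟨ℓ, hℓp, hℓd⟩ := Nat.exists_prime_and_dvd (by omega : d ≠ 1)
    obtain ⟨e, rfl⟩ := hℓd
    have hedvd : e ∣ (20 * z ^ 2 - 1).natAbs := dvd_trans (Dvd.intro_left ℓ rfl) hd
    have hepos : 0 < e := by
      rcases Nat.eq_zero_or_pos e with rfl | h; · simp at h2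
      exact h
    have helt : e < ℓ * e := by
      have h2ℓ : 2 ≤ ℓ := hℓp.two_le
      calc e < 2 * e := by omega
        _ ≤ ℓ * e := Nat.mul_le_mul_right e h2ℓ
    have hℓdvd : (ℓ : ℤ) ∣ 20 * z ^ 2 - 1 := by
      have h1 : (ℓ : ℤ) ∣ ((20 * z ^ 2 - 1).natAbs : ℤ) :=
        Int.natCast_dvd_natCast.mpr (dvd_trans ⟨e, rfl⟩ hd)
      exact h1.trans (Int.natAbs_dvd.mpr dvd_rfl)
    have hℓsq := prime_factor_sq_one z ℓ hℓp hℓdvd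
    have hesq := ih e helt hedvd
    push_cast
    calc ((ℓ : ZMod 5) * e) ^ 2 = (ℓ : ZMod 5) ^ 2 * (e : ZMod 5) ^ 2 := by ring
      _ = 1 := by rw [hℓsq, hesq, one_mul]

/-- Every integer divisor of `20z² - 1` squares to `1` mod 5. -/
lemma int_divisor_sq_one (z d : ℤ) (h : d ∣ 20 * z ^ 2 - 1) :
    ((d : ZMod 5)) ^ 2 = 1 := by
  have h1 := divisor_sq_one z d.natAbs (Int.natAbs_dvd_natAbs.mpr h)
  rcases Int.natAbs_eq d with he | he
  · rw [he]; exact_mod_cast h1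
  · rw [he, show (((-(d.natAbs : ℤ)) : ℤ) : ZMod 5) ^ 2 = (((d.natAbs : ℤ)) : ZMod 5) ^ 2 by
      push_cast; ring]
    exact_mod_cast h1

/-- There are no integers `p, q, z` satisfying `25p² - 1 = q² - 20z²`. -/
theorem no_solution_25p2 :
    ¬ ∃ p q z : ℤ, 25 * p ^ 2 - 1 = q ^ 2 - 20 * z ^ 2 := by
  rintro ⟨p, q, z, h⟩
  -- `q - 5p` divides `q² - 25p² = 20z² - 1`
  have hdvd : (q - 5 * p) ∣ 20 * z ^ 2 - 1 :=
    ⟨q + 5 * p, by linear_combination h⟩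
  have hsq1 : ((q - 5 * p : ℤ) : ZMod 5) ^ 2 = 1 := int_divisor_sq_one z _ hdvd
  -- but `(q - 5p)² ≡ q² ≡ -1 mod 5`
  have h5eq : ((25 * p ^ 2 - 1 : ℤ) : ZMod 5) = ((q ^ 2 - 20 * z ^ 2 : ℤ) : ZMod 5) := by
    rw [h]
  push_cast at h5eq hsq1
  have : (1 : ZMod 5) = -1 := by
    linear_combination -hsq1 - h5eq + 2 * (p : ZMod 5) ^ 2 * zmod5_25
      + (z : ZMod 5) ^ 2 * zmod5_20 + (-2 * (p : ZMod 5) * (q : ZMod 5)) * zmod5_5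
  exact absurd this zmod5_ne
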